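/- Consider a finite graph Γ = (𝒱, ℰ) where each edge e is identified with [0,1] and carries the Schrödinger operator h_e = -d²/dz² + V_e with V_e ∈ L²((0,1)), V_e(z)=V_e(1-z). Let λ be such that φ_e(1,λ) ≠ 0 for all e, where φ_e solves h_e φ_e = λφ_e, φ_e(0)=0, φ_e'(0)=1. Then a family {u_e} of edge solutions of (h_e - λ)u_e = 0 that is continuous at vertices (defining a vertex function û) satisfies the δ-coupling condition ∑_{e ∋ v} u_e'(v) = C_v û(v) at an interior vertex v of degree d_v if and only if the vertex Schrödinger equation (1/d_v)∑_{w∼v} û(w)/φ_{e_{vw}}(1,λ) = ((1/d_v)∑_{e ∋ v} φ_e'(1,λ)/φ_e(1,λ) + C_v/d_v)·û(v) holds at v. -/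

import Mathlib

open MeasureTheory Set

/-- On a finite quantum graph with unit edges, symmetric edge potentials and
nonvanishing `φ_e(1,λ)`, a vertex-continuous family of edge solutions of `(h_e - λ)u_e = 0`
satisfies the δ-coupling condition at an interior vertex `v₀` iff the discrete vertex
Schrödinger equation holds at `v₀`. -/
theorem delta_coupling_iff_vertex_schroedinger
    {V : Type*} [Fintype V] (G : SimpleGraph V) [DecidableRel G.Adj]
    (lam : ℂ)
    -- edge potentials, parametrized from each endpoint
    (Ve : V → V → ℝ → ℝ)
    (hVsym : ∀ v w, G.Adj v w → ∀ z ∈ Icc (0:ℝ) 1, Ve v w z = Ve v w (1 - z))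
    (hVor : ∀ v w, G.Adj v w → ∀ z ∈ Icc (0:ℝ) 1, Ve v w z = Ve w v (1 - z))
    -- fundamental solutions φ_e on each (oriented) edge
    (φ φd : V → V → ℝ → ℂ)
    (hφ : ∀ v w, G.Adj v w → ∀ z ∈ Icc (0:ℝ) 1, HasDerivAt (φ v w) (φd v w z) z)
    (hφd : ∀ v w, G.Adj v w → ∀ z ∈ Icc (0:ℝ) 1,
      HasDerivAt (φd v w) (((Ve v w z : ℂ) - lam) * φ v w z) z)
    (hφ0 : ∀ v w, G.Adj v w → φ v w 0 = 0)
    (hφ0' : ∀ v w, G.Adj v w → φd v w 0 = 1)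
    (hφ1 : ∀ v w, G.Adj v w → φ v w 1 ≠ 0)
    -- the family of edge solutions and its vertex values
    (u ud : V → V → ℝ → ℂ) (uh : V → ℂ)
    (hu : ∀ v w, G.Adj v w → ∀ z ∈ Icc (0:ℝ) 1, HasDerivAt (u v w) (ud v w z) z)
    (hud : ∀ v w, G.Adj v w → ∀ z ∈ Icc (0:ℝ) 1,
      HasDerivAt (ud v w) (((Ve v w z : ℂ) - lam) * u v w z) z)
    (hor : ∀ v w, G.Adj v w → ∀ z ∈ Icc (0:ℝ) 1, u v w z = u w v (1 - z))
    (hcont : ∀ v w, G.Adj v w → u v w 0 = uh v)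
    -- interior vertex and coupling constant
    (v₀ : V) (hdeg : 0 < G.degree v₀) (C : ℝ) :
    ((∑ w ∈ G.neighborFinset v₀, ud v₀ w 0) = (C : ℂ) * uh v₀) ↔
      ((1 / (G.degree v₀ : ℂ)) * ∑ w ∈ G.neighborFinset v₀, uh w / φ v₀ w 1
        = ((1 / (G.degree v₀ : ℂ)) * ∑ w ∈ G.neighborFinset v₀, φd v₀ w 1 / φ v₀ w 1
            + (C : ℂ) / (G.degree v₀ : ℂ)) * uh v₀) := by
  have key : ∀ w ∈ G.neighborFinset v₀,
      ud v₀ w 0 = uh w / φ v₀ w 1 - uh v₀ * (φd v₀ w 1 / φ v₀ w 1) := by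
    intro w hw
    rw [SimpleGraph.mem_neighborFinset] at hw
    set f : ℝ → ℂ := fun z =>
      u v₀ w z * (-(φd v₀ w (1 - z))) - ud v₀ w z * φ v₀ w (1 - z) with hf
    have hmem : ∀ z ∈ Icc (0:ℝ) 1, (1 - z) ∈ Icc (0:ℝ) 1 := by
      intro z hz
      constructor <;> [linarith [hz.2]; linarith [hz.1]]
    have hderiv : ∀ z ∈ Icc (0:ℝ) 1, HasDerivAt f 0 z := by
      intro z hz
      have hB : HasDerivAt (fun z : ℝ => φ v₀ w (1 - z)) (-(φd v₀ w (1 - z))) z := by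
        have h1 : HasDerivAt (fun z : ℝ => 1 - z) (-1) z := (hasDerivAt_id z).const_sub 1
        have := (hφ v₀ w hw (1 - z) (hmem z hz)).scomp z h1
        simp at this
        exact this
      have hA : HasDerivAt (fun z : ℝ => -(φd v₀ w (1 - z)))
          (((Ve v₀ w z : ℂ) - lam) * φ v₀ w (1 - z)) z := by
        have h1 : HasDerivAt (fun z : ℝ => 1 - z) (-1) z := (hasDerivAt_id z).const_sub 1
        have h2 := ((hφd v₀ w hw (1 - z) (hmem z hz)).scomp z h1).neg
        have hV : Ve v₀ w (1 - z) = Ve v₀ w z := by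
          rw [hVsym v₀ w hw z hz]
        simp [hV] at h2
        exact h2
      have hDu := hu v₀ w hw z hz
      have hDud := hud v₀ w hw z hz
      have := (hDu.mul hA).sub (hDud.mul hB)
      convert this using 1
      · rfl
      · rfl
      · ring
    have hconst := constant_of_has_deriv_right_zero
      (f := f) (a := 0) (b := 1)
      (fun z hz => (hderiv z hz).continuousAt.continuousWithinAt)
      (fun z hz => ((hderiv z (Ico_subset_Icc_self hz)).hasDerivWithinAt))
      1 (right_mem_Icc.mpr zero_le_one)
    have hu1 : u v₀ w 1 = uh w := by
      have := hor v₀ w hw 1 (right_mem_Icc.mpr zero_le_one)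
      rw [this]
      norm_num
      exact hcont w v₀ hw.symm
    have hf1 : f 1 = -uh w := by
      simp only [hf]
      norm_num [hu1, hφ0 v₀ w hw, hφ0' v₀ w hw]
    have hf0 : f 0 = uh v₀ * (-(φd v₀ w 1)) - ud v₀ w 0 * φ v₀ w 1 := by
      simp only [hf]
      norm_num [hcont v₀ w hw]
    have heq : -uh w = uh v₀ * (-(φd v₀ w 1)) - ud v₀ w 0 * φ v₀ w 1 := by
      rw [← hf1, ← hf0, hconst]
    have hne := hφ1 v₀ w hw
    field_simp
    linear_combination heq
  have hsum : (∑ w ∈ G.neighborFinset v₀, ud v₀ w 0)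
      = (∑ w ∈ G.neighborFinset v₀, uh w / φ v₀ w 1)
        - uh v₀ * ∑ w ∈ G.neighborFinset v₀, φd v₀ w 1 / φ v₀ w 1 := by
    rw [Finset.mul_sum, ← Finset.sum_sub_distrib]
    exact Finset.sum_congr rfl key
  rw [hsum]
  have hd : (G.degree v₀ : ℂ) ≠ 0 := by
    exact_mod_cast Nat.cast_ne_zero.mpr hdeg.ne'
  constructor
  · intro h
    linear_combination (1 / (G.degree v₀ : ℂ)) * h
  · intro h
    have h' := congrArg (fun x => (G.degree v₀ : ℂ) * x) h
    field_simp at h'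
    linear_combination h'
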